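/- In sl(n+1, F) (n ≥ 2, F a field of characteristic 0), the subspaces g_i = span{E_{i+1,j} : 1 ≤ j ≤ n+1, j ≠ i+1} ∪ span{H_i} for 1 ≤ i ≤ n (where H_i = E_{1,1} - E_{i+1,i+1}), together with g_0 = span{E_{1,j} : 2 ≤ j ≤ n+1}, satisfy: each g_i is a Lie subalgebra, each g_i ⊕ g_j is a Lie subalgebra, and sl(n+1,F) = g_0 ⊕ g_1 ⊕ … ⊕ g_n as vector spaces. -/

import Mathlib

open Matrix

attribute [local instance 100] LieRing.ofAssociativeRing

/-- The `i`-th summand of the row decomposition of `sl(n+1, F)`: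
for `i = 0` it is spanned by the `E_{1,j}`, `j ≠ 1` (0-indexed: `E_{0,j}`, `j ≠ 0`);
for `i ≠ 0` it is spanned by the `E_{i,j}`, `j ≠ i`, together with
`H_i = E_{0,0} - E_{i,i}`. -/
def rowSummand (F : Type*) [Field F] (n : ℕ) (i : Fin (n + 1)) :
    Submodule F (Matrix (Fin (n + 1)) (Fin (n + 1)) F) :=
  Submodule.span F
    ({M | ∃ j : Fin (n + 1), j ≠ i ∧ M = single i j (1 : F)} ∪
      (if i = 0 then ∅
        else {single (0 : Fin (n + 1)) 0 (1 : F) - single i i (1 : F)}))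

section Aux

variable {F : Type*} [Field F] {n : ℕ}

/-- Traceless matrices supported on rows `i`, `j` and the `(0,0)` entry. -/
def rowQ (F : Type*) [Field F] (n : ℕ) (i j : Fin (n + 1)) :
    Submodule F (Matrix (Fin (n + 1)) (Fin (n + 1)) F) where
  carrier := {A | (∀ k l, k ≠ i → k ≠ j → ¬(k = 0 ∧ l = 0) → A k l = 0) ∧ A.trace = 0}
  add_mem' := by
    rintro a b ⟨ha, ha'⟩ ⟨hb, hb'⟩
    exact ⟨fun k l h1 h2 h3 => by simp [Matrix.add_apply, ha k l h1 h2 h3, hb k l h1 h2 h3],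
      by simp [ha', hb']⟩
  zero_mem' := ⟨fun _ _ _ _ _ => rfl, by simp⟩
  smul_mem' := by
    rintro c a ⟨ha, ha'⟩
    exact ⟨fun k l h1 h2 h3 => by simp [Matrix.smul_apply, ha k l h1 h2 h3], by simp [ha']⟩

lemma mem_rowQ {i j : Fin (n + 1)} {A : Matrix (Fin (n + 1)) (Fin (n + 1)) F} :
    A ∈ rowQ F n i j ↔
      (∀ k l, k ≠ i → k ≠ j → ¬(k = 0 ∧ l = 0) → A k l = 0) ∧ A.trace = 0 := Iff.rfl

lemma trace_eq_sum (A : Matrix (Fin (n + 1)) (Fin (n + 1)) F) :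
    A.trace = ∑ k, A k k := rfl

lemma sum_support_two {f : Fin (n + 1) → F} {i : Fin (n + 1)} (hi : i ≠ 0)
    (hf : ∀ k, k ≠ 0 → k ≠ i → f k = 0) : ∑ k, f k = f 0 + f i := by
  have h := Finset.sum_subset (Finset.subset_univ ({0, i} : Finset (Fin (n + 1))))
    (fun x _ hx => by
      simp only [Finset.mem_insert, Finset.mem_singleton, not_or] at hx
      exact hf x hx.1 hx.2)
  rw [← h, Finset.sum_pair (Ne.symm hi)]

lemma sum_support_one {f : Fin (n + 1) → F} {i : Fin (n + 1)}
    (hf : ∀ k, k ≠ i → f k = 0) : ∑ k, f k = f i :=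
  Finset.sum_eq_single i (fun k _ hk => hf k hk) (by simp)

lemma rowSummand_eq (i : Fin (n + 1)) : rowSummand F n i = rowQ F n i i := by
  apply le_antisymm
  · rw [rowSummand, Submodule.span_le]
    rintro M (⟨j, hj, rfl⟩ | hM)
    · refine ⟨fun k l hk _ _ => ?_, Matrix.trace_single_eq_of_ne i j (1 : F) (Ne.symm hj)⟩
      simp [single, (Ne.symm hk)]
    · by_cases hi : i = 0
      · rw [if_pos hi] at hM; exact absurd hM (Set.notMem_empty M)
      · rw [if_neg hi] at hM
        rw [Set.mem_singleton_iff] at hM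
        subst hM
        constructor
        · intro k l hk hk' h0
          simp only [Matrix.sub_apply, single, of_apply]
          rw [if_neg, if_neg, sub_zero]
          · rintro ⟨rfl, -⟩; exact hk rfl
          · rintro ⟨rfl, rfl⟩; exact h0 ⟨rfl, rfl⟩
        · rw [Matrix.trace_sub, Matrix.trace_single_eq_same,
            Matrix.trace_single_eq_same, sub_self]
  · rintro M ⟨hsupp, htr⟩
    have hMeq : M = (∑ j ∈ Finset.univ.erase i, M i j • single i j (1 : F))
        + M 0 0 • (single (0 : Fin (n + 1)) 0 (1 : F) - single i i (1 : F)) := by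
      ext k l
      rw [Matrix.add_apply, Matrix.sum_apply]
      simp only [Matrix.smul_apply, Matrix.sub_apply, single, of_apply, smul_eq_mul,
        mul_ite, mul_one, mul_zero, mul_sub]
      by_cases hk : i = k
      · obtain rfl := hk
        simp only [true_and, and_self, if_true]
        by_cases hl : i = l
        · obtain rfl := hl
          rw [Finset.sum_eq_zero (fun x hx => if_neg (Finset.mem_erase.mp hx).1)]
          by_cases hi0 : i = 0
          · obtain rfl := hi0
            have h1 : M.trace = M 0 0 := sum_support_one (fun m hm =>
              hsupp m m hm hm (fun h => hm h.1))
            rw [htr] at h1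
            simp [← h1]
          · have h2 : M.trace = M 0 0 + M i i := by
              rw [trace_eq_sum]
              exact sum_support_two hi0 (fun m hm0 hmi =>
                hsupp m m hmi hmi (fun h => hm0 h.1))
            rw [htr] at h2
            rw [if_neg (fun h : (0 : Fin (n+1)) = i ∧ (0 : Fin (n+1)) = i => hi0 h.1.symm)]
            rw [if_pos rfl]
            linear_combination -h2
        · rw [Finset.sum_ite_eq' (Finset.univ.erase i) l (fun x => M i x),
            if_pos (Finset.mem_erase.mpr ⟨fun h => hl h.symm, Finset.mem_univ l⟩)]
          rw [if_neg (fun h : _ ∧ (0 : Fin (n+1)) = l => hl (h.1.symm.trans h.2)), if_neg hl]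
          simp
      · rw [Finset.sum_eq_zero (fun x hx => if_neg (fun h : i = k ∧ _ => hk h.1))]
        rw [if_neg (fun h : i = k ∧ i = l => hk h.1)]
        by_cases h0 : (0 : Fin (n+1)) = k ∧ (0 : Fin (n+1)) = l
        · obtain ⟨rfl, rfl⟩ := h0
          rw [if_pos ⟨rfl, rfl⟩]
          simp
        · rw [if_neg h0]
          rw [hsupp k l (fun h => hk h.symm) (fun h => hk h.symm)
            (fun h => h0 ⟨h.1.symm, h.2.symm⟩)]
          simp
    rw [hMeq]
    refine Submodule.add_mem _ (Submodule.sum_mem _ fun j hj => Submodule.smul_mem _ _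
      (Submodule.subset_span (Or.inl ⟨j, (Finset.mem_erase.mp hj).1, rfl⟩))) ?_
    by_cases hi : i = 0
    · subst hi
      rw [sub_self]
      exact Submodule.smul_mem _ _ (Submodule.zero_mem _)
    · exact Submodule.smul_mem _ _ (Submodule.subset_span (Or.inr (by
        rw [if_neg hi]; exact rfl)))

lemma rowQ_left_le (i j : Fin (n + 1)) : rowQ F n i i ≤ rowQ F n i j := by
  rintro M ⟨hs, ht⟩
  exact ⟨fun k l h1 _ h3 => hs k l h1 h1 h3, ht⟩

lemma rowQ_comm (i j : Fin (n + 1)) : rowQ F n i j = rowQ F n j i := by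
  apply le_antisymm <;>
    (rintro M ⟨hs, ht⟩; exact ⟨fun k l h1 h2 h3 => hs k l h2 h1 h3, ht⟩)

lemma lie_mem_rowQ {i j : Fin (n + 1)} {A B : Matrix (Fin (n + 1)) (Fin (n + 1)) F}
    (hA : A ∈ rowQ F n i j) (hB : B ∈ rowQ F n i j) : ⁅A, B⁆ ∈ rowQ F n i j := by
  obtain ⟨hA, -⟩ := hA
  obtain ⟨hB, -⟩ := hB
  constructor
  · intro k l hki hkj hk0
    have key : ∀ C D : Matrix (Fin (n + 1)) (Fin (n + 1)) F,
        (∀ k l, k ≠ i → k ≠ j → ¬(k = 0 ∧ l = 0) → C k l = 0) →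
        (∀ k l, k ≠ i → k ≠ j → ¬(k = 0 ∧ l = 0) → D k l = 0) →
        ∑ m, C k m * D m l = 0 := by
      intro C D hC hD
      apply Finset.sum_eq_zero
      intro m _
      by_cases hm : k = 0 ∧ m = 0
      · obtain ⟨rfl, rfl⟩ := hm
        rw [hD 0 l hki hkj (by rintro ⟨-, rfl⟩; exact hk0 ⟨rfl, rfl⟩), mul_zero]
      · rw [hC k m hki hkj hm, zero_mul]
    rw [Ring.lie_def, Matrix.sub_apply, Matrix.mul_apply, Matrix.mul_apply,
      key A B hA hB, key B A hB hA, sub_self]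
  · rw [Ring.lie_def, Matrix.trace_sub, Matrix.trace_mul_comm, sub_self]

/-- The row part of a matrix: row `i` together with a compensating `(0,0)` entry. -/
def rowPart (M : Matrix (Fin (n + 1)) (Fin (n + 1)) F) (i : Fin (n + 1)) :
    Matrix (Fin (n + 1)) (Fin (n + 1)) F :=
  Matrix.of fun k l => if k = i then M i l else if k = 0 ∧ l = 0 then -(M i i) else 0

lemma rowPart_mem {M : Matrix (Fin (n + 1)) (Fin (n + 1)) F} {i : Fin (n + 1)} (hi : i ≠ 0) :
    rowPart M i ∈ rowQ F n i i := by
  constructor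
  · intro k l hk _ h0
    simp only [rowPart, of_apply, if_neg hk]
    rw [if_neg h0]
  · rw [trace_eq_sum]
    have h := sum_support_two (f := fun k => rowPart M i k k) hi (fun k hk0 hki => by
      simp only [rowPart, of_apply, if_neg hki]
      rw [if_neg (by rintro ⟨rfl, -⟩; exact hk0 rfl)])
    rw [h]
    simp [rowPart, Ne.symm hi]

lemma rowQ_split {i j : Fin (n + 1)} (hi0 : i ≠ 0) :
    rowQ F n i j ≤ rowQ F n i i ⊔ rowQ F n j j := by
  rintro M hM
  obtain ⟨hsupp, htr⟩ := hM
  have hu : rowPart M i ∈ rowQ F n i i := rowPart_mem hi0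
  have hv : M - rowPart M i ∈ rowQ F n j j := by
    constructor
    · intro k l hkj _ h0
      simp only [Matrix.sub_apply, rowPart, of_apply]
      by_cases hk : k = i
      · subst hk; rw [if_pos rfl, sub_self]
      · rw [if_neg hk, if_neg h0, sub_zero]
        exact hsupp k l hk hkj h0
    · rw [Matrix.trace_sub, htr, hu.2, sub_self]
  have : M = rowPart M i + (M - rowPart M i) := by abel
  rw [this]
  exact Submodule.add_mem _ (Submodule.mem_sup_left hu) (Submodule.mem_sup_right hv)

lemma rowQ_le_sup (i j : Fin (n + 1)) : rowQ F n i j ≤ rowQ F n i i ⊔ rowQ F n j j := by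
  rcases eq_or_ne i j with rfl | hij
  · exact le_sup_left
  · rcases eq_or_ne i 0 with rfl | hi0
    · have hj0 : j ≠ 0 := fun h => hij h.symm
      rw [rowQ_comm, sup_comm]
      exact rowQ_split hj0
    · exact rowQ_split hi0

/-- Upper bound submodule used for disjointness: matrices whose
row `i` vanishes away from the `(0,0)` entry. -/
def rowT (F : Type*) [Field F] (n : ℕ) (i : Fin (n + 1)) :
    Submodule F (Matrix (Fin (n + 1)) (Fin (n + 1)) F) where
  carrier := {A | ∀ l, ¬(i = 0 ∧ l = 0) → A i l = 0}
  add_mem' := by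
    intro a b ha hb
    intro l hl
    simp [Matrix.add_apply, ha l hl, hb l hl]
  zero_mem' := fun _ _ => rfl
  smul_mem' := by
    intro c a ha l hl
    simp [Matrix.smul_apply, ha l hl]

end Aux

theorem stmt18 (F : Type*) [Field F] [CharZero F] (n : ℕ) (hn : 2 ≤ n) :
    (∀ i, ∀ x ∈ rowSummand F n i, ∀ y ∈ rowSummand F n i,
        ⁅x, y⁆ ∈ rowSummand F n i) ∧
    (∀ i j, ∀ x ∈ rowSummand F n i ⊔ rowSummand F n j,
        ∀ y ∈ rowSummand F n i ⊔ rowSummand F n j,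
        ⁅x, y⁆ ∈ rowSummand F n i ⊔ rowSummand F n j) ∧
    iSupIndep (rowSummand F n) ∧
    (⨆ i, rowSummand F n i) =
      (LieAlgebra.SpecialLinear.sl (Fin (n + 1)) F).toSubmodule := by
  refine ⟨?_, ?_, ?_, ?_⟩
  · intro i x hx y hy
    rw [rowSummand_eq] at hx hy ⊢
    exact lie_mem_rowQ hx hy
  · intro i j x hx y hy
    have hle : rowSummand F n i ⊔ rowSummand F n j ≤ rowQ F n i j := by
      rw [rowSummand_eq, rowSummand_eq]
      exact sup_le (rowQ_left_le i j) (le_trans (rowQ_left_le j i) (le_of_eq (rowQ_comm j i)))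
    have h := lie_mem_rowQ (hle hx) (hle hy)
    have h2 := rowQ_le_sup (F := F) (n := n) i j h
    rwa [← rowSummand_eq, ← rowSummand_eq] at h2
  · rw [iSupIndep_def]
    intro i
    rw [Submodule.disjoint_def]
    intro x hx hx'
    rw [rowSummand_eq] at hx
    obtain ⟨hsupp, htr⟩ := hx
    have hxT : x ∈ rowT F n i := by
      refine (iSup_le fun j => iSup_le fun hj => ?_ : (⨆ j, ⨆ _ : j ≠ i, rowSummand F n j) ≤ rowT F n i) hx'
      rw [rowSummand_eq]
      rintro M ⟨hs, -⟩ l hl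
      exact hs i l (Ne.symm hj) (Ne.symm hj) hl
    have h00 : x 0 0 = 0 := by
      have : x.trace = x 0 0 := sum_support_one (fun k hk => by
        by_cases hki : k = i
        · subst hki
          exact hxT k (by rintro ⟨rfl, -⟩; exact hk rfl)
        · exact hsupp k k hki hki (by rintro ⟨rfl, -⟩; exact hk rfl))
      rw [htr] at this
      exact this.symm
    ext k l
    rw [Matrix.zero_apply]
    by_cases h0 : k = 0 ∧ l = 0
    · obtain ⟨rfl, rfl⟩ := h0
      exact h00
    · by_cases hk : k = i
      · subst hk
        exact hxT l (by rintro ⟨rfl, rfl⟩; exact h0 ⟨rfl, rfl⟩)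
      · exact hsupp k l hk hk h0
  · apply le_antisymm
    · apply iSup_le
      intro i
      rw [rowSummand_eq]
      rintro M ⟨-, h⟩
      exact h
    · intro M hM
      have htr : M.trace = 0 := hM
      have hv0 : M - ∑ i ∈ Finset.univ.erase 0, rowPart M i ∈ rowQ F n 0 0 := by
        have hsum : ∀ k l, (∑ i ∈ Finset.univ.erase 0, rowPart M i) k l =
            ∑ i ∈ Finset.univ.erase 0, rowPart M i k l := by
          intro k l; rw [Matrix.sum_apply]
        constructor
        · intro k l hk _ _
          rw [Matrix.sub_apply, hsum]
          have : ∑ i ∈ Finset.univ.erase 0, rowPart M i k l = M k l := by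
            rw [Finset.sum_eq_single k]
            · simp [rowPart]
            · intro i hi hik
              simp only [rowPart, of_apply, if_neg (Ne.symm hik)]
              rw [if_neg (by rintro ⟨rfl, -⟩; exact hk rfl)]
            · intro hnot
              exact absurd (Finset.mem_erase.mpr ⟨hk, Finset.mem_univ k⟩) hnot
          rw [this, sub_self]
        · have key : ∀ k, (M - ∑ i ∈ Finset.univ.erase 0, rowPart M i) k k =
              if k = 0 then (M - ∑ i ∈ Finset.univ.erase 0, rowPart M i) 0 0 else 0 := by
            intro k
            by_cases hk : k = 0
            · subst hk; rw [if_pos rfl]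
            · rw [if_neg hk, Matrix.sub_apply, hsum]
              rw [Finset.sum_eq_single k]
              · simp [rowPart]
              · intro i hi hik
                simp only [rowPart, of_apply, if_neg (Ne.symm hik)]
                rw [if_neg (by rintro ⟨rfl, -⟩; exact hk rfl)]
              · intro hnot
                exact absurd (Finset.mem_erase.mpr ⟨hk, Finset.mem_univ k⟩) hnot
          have h00 : (M - ∑ i ∈ Finset.univ.erase 0, rowPart M i) 0 0 = 0 := by
            rw [Matrix.sub_apply, hsum]
            have : ∑ i ∈ Finset.univ.erase 0, rowPart M i 0 0 =
                ∑ i ∈ Finset.univ.erase 0, -(M i i) := by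
              apply Finset.sum_congr rfl
              intro i hi
              simp [rowPart, Ne.symm (Finset.mem_erase.mp hi).1]
            rw [this]
            have htr' : M 0 0 + ∑ i ∈ Finset.univ.erase 0, M i i = 0 := by
              rw [Finset.add_sum_erase Finset.univ (fun i => M i i) (Finset.mem_univ 0)]
              exact htr
            rw [Finset.sum_neg_distrib]
            linear_combination htr'
          rw [trace_eq_sum]
          calc ∑ k, (M - ∑ i ∈ Finset.univ.erase 0, rowPart M i) k k
              = ∑ k : Fin (n + 1), if k = 0 then
                  (M - ∑ i ∈ Finset.univ.erase 0, rowPart M i) 0 0 else 0 := by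
                apply Finset.sum_congr rfl; intro k _; exact key k
            _ = (M - ∑ i ∈ Finset.univ.erase 0, rowPart M i) 0 0 := by
                rw [Finset.sum_ite_eq' Finset.univ 0]; simp
            _ = 0 := h00
      have hMeq : M = (M - ∑ i ∈ Finset.univ.erase 0, rowPart M i) +
          ∑ i ∈ Finset.univ.erase 0, rowPart M i := by abel
      rw [hMeq]
      refine Submodule.add_mem _ (Submodule.mem_iSup_of_mem 0 ?_)
        (Submodule.sum_mem _ fun i hi => Submodule.mem_iSup_of_mem i ?_)
      · rw [rowSummand_eq]; exact hv0
      · rw [rowSummand_eq]; exact rowPart_mem (Finset.mem_erase.mp hi).1
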